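/- Let n ≥ 5 and fix a pair of indices i ≠ j in {1,…,n}. Suppose the parameter collection c satisfies condition (C1): c_i^{kj} c_j^{li} ≠ c_j^{ki} c_i^{lj} for all k ≠ l with k,l ∉ {i,j}. Let a = (a_1,…,a_n) ∈ ℝ^n be a unit vector with a_i = a_j = 0, with a_k ≠ 0 for every k ∉ {i,j}, satisfying the two linear equations Σ_{k∉{i,j}} c_i^{kj} a_k = 0 and Σ_{k∉{i,j}} c_j^{ki} a_k = 0, and such that for every p ∉ {i,j} at least one of Σ_{k∉{i,j}} c_p^{ki} a_k ≠ 0 or Σ_{k∉{i,j}} c_p^{kj} a_k ≠ 0 holds. Then there exist T > 0 and a continuous map ξ : (0,T) → ℝ^n \ {0} with ξ(t) → a as t → 0⁺, such that for every t ∈ (0,T) one has rank P(ξ(t), tc) ≤ n−2, i.e., ξ(t) ∈ Σ_sing(tc). -/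

import Mathlib

open Matrix

/-- A parameter collection: `c i k j` denotes `c_i^{kj}`, symmetric in the two
superscripts, with normalizations `c_i^{ii} = 1` and `c_i^{jj} = 0` for `i ≠ j`. -/
def IsParamColl (n : ℕ) (c : Fin n → Fin n → Fin n → ℝ) : Prop :=
  (∀ i j k : Fin n, j ≠ k → c i k j = c i j k) ∧
  (∀ i : Fin n, c i i i = 1) ∧
  (∀ i j : Fin n, i ≠ j → c i j j = 0)

/-- The principal symbol `P(ξ, c) = Σ_k ξ_k A^k`, where `(A^k)_{ij} = c_i^{kj}`. -/
def pSymb {n : ℕ} (ξ : Fin n → ℝ) (c : Fin n → Fin n → Fin n → ℝ) :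
    Matrix (Fin n) (Fin n) ℝ :=
  Matrix.of fun i j => ∑ k, ξ k * c i k j

/-- The scaled parameter collection `t • c` (normalized entries unchanged). -/
def pScale {n : ℕ} (t : ℝ) (c : Fin n → Fin n → Fin n → ℝ) :
    Fin n → Fin n → Fin n → ℝ :=
  fun i k j => if k = j then c i k j else t * c i k j

namespace Stmt2Aux

variable {n : ℕ} (c : Fin n → Fin n → Fin n → ℝ) (i j k0 l0 : Fin n) (a : Fin n → ℝ)

/-- index type of the "big" principal block -/
abbrev SIdx (i j : Fin n) := {p : Fin n // p ≠ i ∧ p ≠ j}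

/-- replace coordinates `i j k0 l0` of `a` by the four coordinates of `y` -/
def xh (y : Fin 4 → ℝ) : Fin n → ℝ := fun p =>
  if p = i then y 0 else if p = j then y 1 else if p = k0 then y 2 else if p = l0 then y 3
    else a p

def Qf (y : Fin 4 → ℝ) (p q : Fin n) : ℝ :=
  ∑ k ∈ Finset.univ.erase q, xh i j k0 l0 a y k * c p k q

def MSS (t : ℝ) (y : Fin 4 → ℝ) : Matrix (SIdx i j) (SIdx i j) ℝ :=
  Matrix.of fun p q => (if (p : Fin n) = (q : Fin n) then xh i j k0 l0 a y p else 0)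
    + t * Qf c i j k0 l0 a y p q

def Aq (t : ℝ) (y : Fin 4 → ℝ) (p q : Fin n) : ℝ :=
  (fun r : SIdx i j => Qf c i j k0 l0 a y p r.1) ⬝ᵥ
    ((MSS c i j k0 l0 a t y).adjugate).mulVec (fun r : SIdx i j => Qf c i j k0 l0 a y r.1 q)

def Phi (t : ℝ) (y : Fin 4 → ℝ) : Fin 4 → ℝ :=
  ![ (MSS c i j k0 l0 a t y).det * (y 0 + t * Qf c i j k0 l0 a y i i)
       - t * (t * Aq c i j k0 l0 a t y i i),
     (MSS c i j k0 l0 a t y).det * (y 1 + t * Qf c i j k0 l0 a y j j)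
       - t * (t * Aq c i j k0 l0 a t y j j),
     (MSS c i j k0 l0 a t y).det * Qf c i j k0 l0 a y i j - t * Aq c i j k0 l0 a t y i j,
     (MSS c i j k0 l0 a t y).det * Qf c i j k0 l0 a y j i - t * Aq c i j k0 l0 a t y j i ]

lemma pSymb_eq (hc : IsParamColl n c) (t : ℝ) (y : Fin 4 → ℝ) (p q : Fin n) :
    pSymb (xh i j k0 l0 a y) (pScale t c) p q
      = (if p = q then xh i j k0 l0 a y p else 0) + t * Qf c i j k0 l0 a y p q := by
  obtain ⟨hsym, hdiag, hoff⟩ := hc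
  show (∑ k, xh i j k0 l0 a y k * pScale t c p k q) = _
  rw [← Finset.insert_erase (Finset.mem_univ q), Finset.sum_insert (Finset.notMem_erase q _)]
  unfold Qf
  rw [Finset.mul_sum]
  congr 1
  · unfold pScale
    simp only [if_pos rfl]
    by_cases hpq : p = q
    · subst hpq; rw [hdiag]; simp [xh]
    · rw [hoff p q hpq, if_neg hpq]; simp
  · apply Finset.sum_congr rfl
    intro k hk
    unfold pScale
    rw [if_neg (Finset.ne_of_mem_erase hk)]
    ring

lemma card_sidx (hij : i ≠ j) (hn : 2 ≤ n) : Fintype.card (SIdx i j) = n - 2 := by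
  rw [Fintype.card_subtype]
  have h : Finset.univ.filter (fun p : Fin n => p ≠ i ∧ p ≠ j) = (Finset.univ \ {i, j}) := by
    ext p
    simp [not_or]
  rw [h, Finset.card_sdiff_of_subset (Finset.subset_univ _), Finset.card_univ, Fintype.card_fin,
    Finset.card_pair hij]


lemma xh_i (y : Fin 4 → ℝ) : xh i j k0 l0 a y i = y 0 := by simp [xh]

lemma rank_le (hc : IsParamColl n c) (hij : i ≠ j)
    (hji : j ≠ i) (t : ℝ) (y : Fin 4 → ℝ)
    (hdet : (MSS c i j k0 l0 a t y).det ≠ 0)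
    (hPhi : Phi c i j k0 l0 a t y = 0) :
    (pSymb (xh i j k0 l0 a y) (pScale t c)).rank ≤ Fintype.card (SIdx i j) := by
  classical
  set M := pSymb (xh i j k0 l0 a y) (pScale t c) with hMdef
  have hM : ∀ p q, M p q
      = (if p = q then xh i j k0 l0 a y p else 0) + t * Qf c i j k0 l0 a y p q :=
    pSymb_eq c i j k0 l0 a hc t y
  set N := MSS c i j k0 l0 a t y with hNdef
  have hNM : ∀ r s : SIdx i j, N r s = M r.1 s.1 := by
    intro r s; rw [hM]; rfl
  have hu : IsUnit N.det := isUnit_iff_ne_zero.mpr hdet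
  set w : Fin n → SIdx i j → ℝ := fun q => N⁻¹.mulVec (fun r => M r.1 q) with hwdef
  have hNw : ∀ q, N.mulVec (w q) = fun r => M r.1 q := by
    intro q
    rw [show w q = N⁻¹.mulVec (fun r => M r.1 q) from rfl,
      Matrix.mulVec_mulVec, Matrix.mul_nonsing_inv _ hu, Matrix.one_mulVec]
  have hoffM : ∀ p q : Fin n, p ≠ q → M p q = t * Qf c i j k0 l0 a y p q := by
    intro p q h; rw [hM, if_neg h, zero_add]
  have hcross : ∀ p q : Fin n, (p = i ∨ p = j) → (q = i ∨ q = j) →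
      ∑ r : SIdx i j, M p r.1 * w q r
        = t * (t * ((N.det)⁻¹ * Aq c i j k0 l0 a t y p q)) := by
    intro p q hp hq
    have hpr : ∀ r : SIdx i j, p ≠ r.1 := by
      intro r
      rcases hp with h | h <;> rw [h]
      · exact fun hh => r.2.1 hh.symm
      · exact fun hh => r.2.2 hh.symm
    have hqr : ∀ r : SIdx i j, r.1 ≠ q := by
      intro r
      rcases hq with h | h <;> rw [h]
      · exact r.2.1
      · exact r.2.2
    have hcol : (fun r : SIdx i j => M r.1 q) = t • (fun r => Qf c i j k0 l0 a y r.1 q) := by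
      funext r
      rw [hoffM _ _ (hqr r)]
      simp
    have hwq : w q = t • ((N.det)⁻¹ •
        (N.adjugate.mulVec (fun r => Qf c i j k0 l0 a y r.1 q))) := by
      rw [show w q = N⁻¹.mulVec (fun r => M r.1 q) from rfl, hcol, Matrix.mulVec_smul,
        Matrix.inv_def, Ring.inverse_eq_inv', Matrix.smul_mulVec]
    have hAq : Aq c i j k0 l0 a t y p q = (fun r : SIdx i j => Qf c i j k0 l0 a y p r.1) ⬝ᵥ
        (N.adjugate.mulVec (fun r => Qf c i j k0 l0 a y r.1 q)) := by
      rw [hNdef]; rfl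
    calc ∑ r : SIdx i j, M p r.1 * w q r
        = ∑ r : SIdx i j, (t * Qf c i j k0 l0 a y p r.1) * w q r := by
          refine Finset.sum_congr rfl fun r _ => ?_
          rw [hoffM _ _ (hpr r)]
      _ = t * ((fun r : SIdx i j => Qf c i j k0 l0 a y p r.1) ⬝ᵥ w q) := by
          simp only [dotProduct, Finset.mul_sum, mul_assoc]
      _ = t * (t * ((N.det)⁻¹ * Aq c i j k0 l0 a t y p q)) := by
          rw [hwq, hAq]
          simp only [dotProduct_smul, smul_eq_mul]
          try ring
  have hP0 := congrFun hPhi 0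
  have hP1 := congrFun hPhi 1
  have hP2 := congrFun hPhi 2
  have hP3 := congrFun hPhi 3
  simp only [Phi, Matrix.cons_val_zero, Matrix.cons_val_one, Matrix.head_cons,
    Matrix.cons_val_two, Matrix.tail_cons, Matrix.cons_val_three, Pi.zero_apply,
    ← hNdef] at hP0 hP1 hP2 hP3
  have main : ∀ p q, (q = i ∨ q = j) → ∑ r : SIdx i j, M p r.1 * w q r = M p q := by
    intro p q hq
    by_cases hp : p ≠ i ∧ p ≠ j
    · have hrow : ∀ r : SIdx i j, M p r.1 = N ⟨p, hp⟩ r := fun r => (hNM ⟨p, hp⟩ r).symm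
      have h1 : ∑ r : SIdx i j, M p r.1 * w q r = N.mulVec (w q) ⟨p, hp⟩ := by
        simp only [Matrix.mulVec, dotProduct]
        exact Finset.sum_congr rfl fun r _ => by rw [hrow r]
      rw [h1, hNw]
    · have hp' : p = i ∨ p = j := by
        by_contra hcon
        push_neg at hcon
        exact hp ⟨hcon.1, hcon.2⟩
      rw [hcross p q hp' hq]
      rcases hp' with hpi | hpj <;> rcases hq with hqi | hqj
      · rw [hpi, hqi]
        have hMii : M i i = y 0 + t * Qf c i j k0 l0 a y i i := by
          rw [hM, if_pos rfl, xh_i]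
        have e : t * (t * Aq c i j k0 l0 a t y i i)
            = N.det * (y 0 + t * Qf c i j k0 l0 a y i i) := by linarith
        rw [hMii]
        calc t * (t * ((N.det)⁻¹ * Aq c i j k0 l0 a t y i i))
            = (N.det)⁻¹ * (t * (t * Aq c i j k0 l0 a t y i i)) := by ring
          _ = (N.det)⁻¹ * (N.det * (y 0 + t * Qf c i j k0 l0 a y i i)) := by rw [e]
          _ = y 0 + t * Qf c i j k0 l0 a y i i := by
              rw [inv_mul_cancel_left₀ hdet]
      · rw [hpi, hqj]
        have e : t * Aq c i j k0 l0 a t y i j = N.det * Qf c i j k0 l0 a y i j := by linarith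
        rw [hoffM _ _ hij]
        have e2 : t * (t * ((N.det)⁻¹ * Aq c i j k0 l0 a t y i j))
            = (N.det)⁻¹ * t * (t * Aq c i j k0 l0 a t y i j) := by ring
        rw [e2, e]
        field_simp
      · rw [hpj, hqi]
        have e : t * Aq c i j k0 l0 a t y j i = N.det * Qf c i j k0 l0 a y j i := by linarith
        rw [hoffM _ _ hji]
        have e2 : t * (t * ((N.det)⁻¹ * Aq c i j k0 l0 a t y j i))
            = (N.det)⁻¹ * t * (t * Aq c i j k0 l0 a t y j i) := by ring
        rw [e2, e]
        field_simp
      · rw [hpj, hqj]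
        have hMjj : M j j = y 1 + t * Qf c i j k0 l0 a y j j := by
          rw [hM, if_pos rfl]
          simp [xh, hji]
        have e : t * (t * Aq c i j k0 l0 a t y j j)
            = N.det * (y 1 + t * Qf c i j k0 l0 a y j j) := by linarith
        rw [hMjj]
        calc t * (t * ((N.det)⁻¹ * Aq c i j k0 l0 a t y j j))
            = (N.det)⁻¹ * (t * (t * Aq c i j k0 l0 a t y j j)) := by ring
          _ = (N.det)⁻¹ * (N.det * (y 1 + t * Qf c i j k0 l0 a y j j)) := by rw [e]
          _ = y 1 + t * Qf c i j k0 l0 a y j j := by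
              rw [inv_mul_cancel_left₀ hdet]
  set B : Matrix (Fin n) (SIdx i j) ℝ := Matrix.of fun p (r : SIdx i j) => M p r.1 with hB
  set C : Matrix (SIdx i j) (Fin n) ℝ := Matrix.of fun (r : SIdx i j) q =>
    if q = i ∨ q = j then w q r else if r.1 = q then 1 else 0 with hC
  have key : M = B * C := by
    ext p q
    rw [Matrix.mul_apply]
    by_cases hq : q = i ∨ q = j
    · simp only [hB, hC, Matrix.of_apply, if_pos hq]
      exact (main p q hq).symm
    · have hq2 : q ≠ i ∧ q ≠ j := ⟨fun h => hq (Or.inl h), fun h => hq (Or.inr h)⟩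
      simp only [hB, hC, Matrix.of_apply, if_neg hq]
      have hrw : ∀ r : SIdx i j, (if r.1 = q then (1:ℝ) else 0)
          = if r = ⟨q, hq2⟩ then 1 else 0 := by
        intro r
        simp [Subtype.ext_iff]
      rw [Finset.sum_congr rfl (fun r _ => by rw [hrw r])]
      simp [mul_ite]
  rw [key]
  exact (Matrix.rank_mul_le_left B C).trans (Matrix.rank_le_card_width B)


section Smooth

variable {E : Type*} [NormedAddCommGroup E] [NormedSpace ℝ E]

lemma contDiff_det_comp {ι : Type*} [Fintype ι] [DecidableEq ι]
    {f : ι → ι → E → ℝ} (hf : ∀ r s, ContDiff ℝ 1 fun x => f r s x) :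
    ContDiff ℝ 1 fun x => (Matrix.of fun r s => f r s x).det := by
  have h : (fun x => (Matrix.of fun r s => f r s x).det)
      = fun x => ∑ σ : Equiv.Perm ι, ((Equiv.Perm.sign σ : ℤ) : ℝ) * ∏ r, f (σ r) r x := by
    funext x
    rw [Matrix.det_apply]
    apply Finset.sum_congr rfl
    intro σ _
    simp [Units.smul_def, zsmul_eq_mul]
  rw [h]
  apply ContDiff.sum
  intro σ _
  exact contDiff_const.mul (contDiff_prod fun r _ => hf (σ r) r)

lemma contDiff_adjugate_comp {ι : Type*} [Fintype ι] [DecidableEq ι]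
    {f : ι → ι → E → ℝ} (hf : ∀ r s, ContDiff ℝ 1 fun x => f r s x) (p q : ι) :
    ContDiff ℝ 1 fun x => (Matrix.of fun r s => f r s x).adjugate p q := by
  have h : (fun x => (Matrix.of fun r s => f r s x).adjugate p q)
      = fun x => (Matrix.of fun r s =>
          if r = q then (Pi.single p 1 : ι → ℝ) s else f r s x).det := by
    funext x
    rw [Matrix.adjugate_apply]
    congr 1
    ext r s
    simp [Matrix.updateRow_apply]
  rw [h]
  apply contDiff_det_comp
  intro r s
  by_cases hr : r = q
  · simp only [if_pos hr]; exact contDiff_const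
  · simp only [if_neg hr]; exact hf r s

end Smooth


/-- projection onto the m-th coordinate of the second factor -/
noncomputable def prm (m : Fin 4) : (ℝ × (Fin 4 → ℝ)) →L[ℝ] ℝ :=
  (ContinuousLinearMap.proj (R := ℝ) (φ := fun _ : Fin 4 => ℝ) m).comp
    (ContinuousLinearMap.snd ℝ ℝ (Fin 4 → ℝ))

lemma prm_apply (m : Fin 4) (pt : ℝ × (Fin 4 → ℝ)) : prm m pt = pt.2 m := rfl

lemma prm_cd (m : Fin 4) : ContDiff ℝ 1 fun pt : ℝ × (Fin 4 → ℝ) => pt.2 m :=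
  (prm m).contDiff

lemma xh_cd (k : Fin n) :
    ContDiff ℝ 1 fun pt : ℝ × (Fin 4 → ℝ) => xh i j k0 l0 a pt.2 k := by
  unfold xh
  split_ifs
  · exact prm_cd (0 : Fin 4)
  · exact prm_cd (1 : Fin 4)
  · exact prm_cd (2 : Fin 4)
  · exact prm_cd (3 : Fin 4)
  · exact contDiff_const

lemma Qf_cd (p q : Fin n) :
    ContDiff ℝ 1 fun pt : ℝ × (Fin 4 → ℝ) => Qf c i j k0 l0 a pt.2 p q := by
  unfold Qf
  apply ContDiff.sum
  intro k _
  exact (xh_cd i j k0 l0 a k).mul contDiff_const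

lemma MSS_cd (r s : SIdx i j) :
    ContDiff ℝ 1 fun pt : ℝ × (Fin 4 → ℝ) => MSS c i j k0 l0 a pt.1 pt.2 r s := by
  show ContDiff ℝ 1 fun pt : ℝ × (Fin 4 → ℝ) =>
    (if (r : Fin n) = (s : Fin n) then xh i j k0 l0 a pt.2 r else 0)
      + pt.1 * Qf c i j k0 l0 a pt.2 r s
  apply ContDiff.add
  · by_cases hrs : (r : Fin n) = (s : Fin n)
    · simp only [if_pos hrs]; exact xh_cd i j k0 l0 a r
    · simp only [if_neg hrs]; exact contDiff_const
  · exact contDiff_fst.mul (Qf_cd c i j k0 l0 a r s)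

lemma det_cd : ContDiff ℝ 1 fun pt : ℝ × (Fin 4 → ℝ) => (MSS c i j k0 l0 a pt.1 pt.2).det :=
  contDiff_det_comp (MSS_cd c i j k0 l0 a)

lemma adj_cd (r s : SIdx i j) :
    ContDiff ℝ 1 fun pt : ℝ × (Fin 4 → ℝ) => (MSS c i j k0 l0 a pt.1 pt.2).adjugate r s :=
  contDiff_adjugate_comp (MSS_cd c i j k0 l0 a) r s

lemma Aq_cd (p q : Fin n) :
    ContDiff ℝ 1 fun pt : ℝ × (Fin 4 → ℝ) => Aq c i j k0 l0 a pt.1 pt.2 p q := by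
  show ContDiff ℝ 1 fun pt : ℝ × (Fin 4 → ℝ) =>
    ∑ r : SIdx i j, Qf c i j k0 l0 a pt.2 p r.1 *
      (∑ s : SIdx i j, (MSS c i j k0 l0 a pt.1 pt.2).adjugate r s * Qf c i j k0 l0 a pt.2 s.1 q)
  apply ContDiff.sum
  intro r _
  apply (Qf_cd c i j k0 l0 a p r.1).mul
  apply ContDiff.sum
  intro s _
  exact (adj_cd c i j k0 l0 a r s).mul (Qf_cd c i j k0 l0 a s.1 q)

lemma Phi_cd : ContDiff ℝ 1 fun pt : ℝ × (Fin 4 → ℝ) => Phi c i j k0 l0 a pt.1 pt.2 := by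
  rw [contDiff_pi]
  intro m
  fin_cases m
  · simp only [Phi, Matrix.cons_val_zero]
    exact ((det_cd c i j k0 l0 a).mul
      ((prm_cd (0 : Fin 4)).add
        (contDiff_fst.mul (Qf_cd c i j k0 l0 a i i)))).sub
      (contDiff_fst.mul (contDiff_fst.mul (Aq_cd c i j k0 l0 a i i)))
  · simp only [Phi, Matrix.cons_val_one, Matrix.head_cons]
    exact ((det_cd c i j k0 l0 a).mul
      ((prm_cd (1 : Fin 4)).add
        (contDiff_fst.mul (Qf_cd c i j k0 l0 a j j)))).sub
      (contDiff_fst.mul (contDiff_fst.mul (Aq_cd c i j k0 l0 a j j)))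
  · simp only [Phi, Matrix.cons_val_two, Matrix.tail_cons, Matrix.head_cons]
    exact ((det_cd c i j k0 l0 a).mul (Qf_cd c i j k0 l0 a i j)).sub
      (contDiff_fst.mul (Aq_cd c i j k0 l0 a i j))
  · simp only [Phi, Matrix.cons_val_three, Matrix.tail_cons, Matrix.head_cons]
    exact ((det_cd c i j k0 l0 a).mul (Qf_cd c i j k0 l0 a j i)).sub
      (contDiff_fst.mul (Aq_cd c i j k0 l0 a j i))


noncomputable def fstc : (ℝ × (Fin 4 → ℝ)) →L[ℝ] ℝ := ContinuousLinearMap.fst ℝ ℝ (Fin 4 → ℝ)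

noncomputable def Xk (i j k0 l0 : Fin n) (k : Fin n) : (ℝ × (Fin 4 → ℝ)) →L[ℝ] ℝ :=
  if k = i then prm 0 else if k = j then prm 1 else if k = k0 then prm 2
    else if k = l0 then prm 3 else 0

lemma xh_hasF (k : Fin n) (pt : ℝ × (Fin 4 → ℝ)) :
    HasFDerivAt (fun pt : ℝ × (Fin 4 → ℝ) => xh i j k0 l0 a pt.2 k) (Xk i j k0 l0 k) pt := by
  unfold xh Xk
  split_ifs with h1 h2 h3 h4
  · exact (prm 0).hasFDerivAt
  · exact (prm 1).hasFDerivAt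
  · exact (prm 2).hasFDerivAt
  · exact (prm 3).hasFDerivAt
  · exact hasFDerivAt_const _ _

noncomputable def LQm (p q : Fin n) : (ℝ × (Fin 4 → ℝ)) →L[ℝ] ℝ :=
  ∑ k ∈ Finset.univ.erase q, c p k q • Xk i j k0 l0 k

lemma Qf_hasF (p q : Fin n) (pt : ℝ × (Fin 4 → ℝ)) :
    HasFDerivAt (fun pt : ℝ × (Fin 4 → ℝ) => Qf c i j k0 l0 a pt.2 p q)
      (LQm c i j k0 l0 p q) pt := by
  unfold Qf LQm
  exact HasFDerivAt.fun_sum fun k _ => (xh_hasF i j k0 l0 a k pt).mul_const (c p k q)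

lemma Xk_eval_zero (k : Fin n) (hki : k ≠ i) (hkj : k ≠ j) (hkk : k ≠ k0) (hkl : k ≠ l0) :
    Xk i j k0 l0 k = 0 := by
  simp only [Xk, if_neg hki, if_neg hkj, if_neg hkk, if_neg hkl]

lemma LQm_eval_ij (hij : i ≠ j) (hk0i : k0 ≠ i) (hk0j : k0 ≠ j) (hl0i : l0 ≠ i)
    (hl0j : l0 ≠ j) (hkl : k0 ≠ l0) (v : ℝ × (Fin 4 → ℝ)) :
    LQm c i j k0 l0 i j v = c i i j * v.2 0 + c i k0 j * v.2 2 + c i l0 j * v.2 3 := by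
  unfold LQm
  rw [ContinuousLinearMap.sum_apply]
  have hsub : ({i, k0, l0} : Finset (Fin n)) ⊆ Finset.univ.erase j := by
    intro x hx
    simp only [Finset.mem_insert, Finset.mem_singleton] at hx
    rcases hx with h | h | h <;> subst h
    · exact Finset.mem_erase.mpr ⟨hij, Finset.mem_univ _⟩
    · exact Finset.mem_erase.mpr ⟨hk0j, Finset.mem_univ _⟩
    · exact Finset.mem_erase.mpr ⟨hl0j, Finset.mem_univ _⟩
  have hzero : ∀ x ∈ Finset.univ.erase j, x ∉ ({i, k0, l0} : Finset (Fin n)) →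
      (c i x j • Xk i j k0 l0 x) v = 0 := by
    intro x hx hnx
    simp only [Finset.mem_insert, Finset.mem_singleton, not_or] at hnx
    rw [Xk_eval_zero i j k0 l0 x hnx.1 (Finset.ne_of_mem_erase hx) hnx.2.1 hnx.2.2]
    simp
  rw [← Finset.sum_subset hsub hzero]
  have hni : i ∉ ({k0, l0} : Finset (Fin n)) := by
    simp only [Finset.mem_insert, Finset.mem_singleton, not_or]
    exact ⟨Ne.symm hk0i, Ne.symm hl0i⟩
  have hnk : k0 ∉ ({l0} : Finset (Fin n)) := by
    simp only [Finset.mem_singleton]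
    exact hkl
  rw [Finset.sum_insert hni, Finset.sum_insert hnk, Finset.sum_singleton]
  have e1 : Xk i j k0 l0 i = prm 0 := by simp only [Xk, if_pos rfl, if_true]
  have e2 : Xk i j k0 l0 k0 = prm 2 := by
    simp only [Xk, if_neg hk0i, if_neg hk0j, if_pos rfl, if_true]
  have e3 : Xk i j k0 l0 l0 = prm 3 := by
    simp only [Xk, if_neg hl0i, if_neg hl0j, if_neg (Ne.symm hkl), if_pos rfl, if_true]
  rw [e1, e2, e3]
  simp [prm_apply]
  ring

lemma LQm_eval_ji (hij : i ≠ j) (hk0i : k0 ≠ i) (hk0j : k0 ≠ j) (hl0i : l0 ≠ i)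
    (hl0j : l0 ≠ j) (hkl : k0 ≠ l0) (v : ℝ × (Fin 4 → ℝ)) :
    LQm c i j k0 l0 j i v = c j j i * v.2 1 + c j k0 i * v.2 2 + c j l0 i * v.2 3 := by
  unfold LQm
  rw [ContinuousLinearMap.sum_apply]
  have hsub : ({j, k0, l0} : Finset (Fin n)) ⊆ Finset.univ.erase i := by
    intro x hx
    simp only [Finset.mem_insert, Finset.mem_singleton] at hx
    rcases hx with h | h | h <;> subst h
    · exact Finset.mem_erase.mpr ⟨fun h => hij h.symm, Finset.mem_univ _⟩
    · exact Finset.mem_erase.mpr ⟨hk0i, Finset.mem_univ _⟩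
    · exact Finset.mem_erase.mpr ⟨hl0i, Finset.mem_univ _⟩
  have hzero : ∀ x ∈ Finset.univ.erase i, x ∉ ({j, k0, l0} : Finset (Fin n)) →
      (c j x i • Xk i j k0 l0 x) v = 0 := by
    intro x hx hnx
    simp only [Finset.mem_insert, Finset.mem_singleton, not_or] at hnx
    rw [Xk_eval_zero i j k0 l0 x (Finset.ne_of_mem_erase hx) hnx.1 hnx.2.1 hnx.2.2]
    simp
  rw [← Finset.sum_subset hsub hzero]
  have hni : j ∉ ({k0, l0} : Finset (Fin n)) := by
    simp only [Finset.mem_insert, Finset.mem_singleton, not_or]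
    exact ⟨Ne.symm hk0j, Ne.symm hl0j⟩
  have hnk : k0 ∉ ({l0} : Finset (Fin n)) := by
    simp only [Finset.mem_singleton]
    exact hkl
  rw [Finset.sum_insert hni, Finset.sum_insert hnk, Finset.sum_singleton]
  have e1 : Xk i j k0 l0 j = prm 1 := by
    simp only [Xk, if_neg (Ne.symm hij), if_pos rfl, if_true]
  have e2 : Xk i j k0 l0 k0 = prm 2 := by
    simp only [Xk, if_neg hk0i, if_neg hk0j, if_pos rfl, if_true]
  have e3 : Xk i j k0 l0 l0 = prm 3 := by
    simp only [Xk, if_neg hl0i, if_neg hl0j, if_neg (Ne.symm hkl), if_pos rfl, if_true]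
  rw [e1, e2, e3]
  simp [prm_apply]
  ring

end Stmt2Aux



open Stmt2Aux in
theorem stmt2 (n : ℕ) (hn : 5 ≤ n) (c : Fin n → Fin n → Fin n → ℝ)
    (hc : IsParamColl n c) (i j : Fin n) (hij : i ≠ j)
    (hC1 : ∀ k l : Fin n, k ≠ l → k ≠ i → k ≠ j → l ≠ i → l ≠ j →
      c i k j * c j l i ≠ c j k i * c i l j)
    (a : Fin n → ℝ)
    (ha_unit : ∑ k, (a k) ^ 2 = 1)
    (hai : a i = 0) (haj : a j = 0)
    (hak : ∀ k : Fin n, k ≠ i → k ≠ j → a k ≠ 0)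
    (heq1 : ∑ k ∈ Finset.univ.filter (fun k => k ≠ i ∧ k ≠ j), c i k j * a k = 0)
    (heq2 : ∑ k ∈ Finset.univ.filter (fun k => k ≠ i ∧ k ≠ j), c j k i * a k = 0)
    (hp : ∀ p : Fin n, p ≠ i → p ≠ j →
      (∑ k ∈ Finset.univ.filter (fun k => k ≠ i ∧ k ≠ j), c p k i * a k ≠ 0) ∨
      (∑ k ∈ Finset.univ.filter (fun k => k ≠ i ∧ k ≠ j), c p k j * a k ≠ 0)) :
    ∃ T > (0 : ℝ), ∃ ξ : ℝ → (Fin n → ℝ),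
      ContinuousOn ξ (Set.Ioo 0 T) ∧
      Filter.Tendsto ξ (nhdsWithin 0 (Set.Ioi 0)) (nhds a) ∧
      ∀ t ∈ Set.Ioo (0 : ℝ) T, ξ t ≠ 0 ∧ (pSymb (ξ t) (pScale t c)).rank ≤ n - 2 := by
  classical
  have hji : j ≠ i := Ne.symm hij
  -- choose three distinct indices outside {i, j}
  have hcard2 : (Finset.univ \ {i, j} : Finset (Fin n)).card = n - 2 := by
    rw [Finset.card_sdiff_of_subset (Finset.subset_univ _), Finset.card_univ, Fintype.card_fin,
      Finset.card_pair hij]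
  have h1 : (Finset.univ \ ({i, j} : Finset (Fin n))).Nonempty := by
    rw [← Finset.card_pos, hcard2]; omega
  obtain ⟨k0, hk0mem⟩ := h1
  have h2 : ((Finset.univ \ ({i, j} : Finset (Fin n))).erase k0).Nonempty := by
    rw [← Finset.card_pos, Finset.card_erase_of_mem hk0mem, hcard2]; omega
  obtain ⟨l0, hl0mem⟩ := h2
  have h3 : (((Finset.univ \ ({i, j} : Finset (Fin n))).erase k0).erase l0).Nonempty := by
    rw [← Finset.card_pos, Finset.card_erase_of_mem hl0mem,
      Finset.card_erase_of_mem hk0mem, hcard2]; omega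
  obtain ⟨m0, hm0mem⟩ := h3
  have hk0' := Finset.mem_sdiff.mp hk0mem
  have hk0i : k0 ≠ i := fun h => hk0'.2 (by simp [h])
  have hk0j : k0 ≠ j := fun h => hk0'.2 (by simp [h])
  have hl0k0 : l0 ≠ k0 := (Finset.mem_erase.mp hl0mem).1
  have hl0' := Finset.mem_sdiff.mp (Finset.mem_of_mem_erase hl0mem)
  have hl0i : l0 ≠ i := fun h => hl0'.2 (by simp [h])
  have hl0j : l0 ≠ j := fun h => hl0'.2 (by simp [h])
  have hm0l0 : m0 ≠ l0 := (Finset.mem_erase.mp hm0mem).1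
  have hm0k0 : m0 ≠ k0 := (Finset.mem_erase.mp (Finset.mem_of_mem_erase hm0mem)).1
  have hm0' := Finset.mem_sdiff.mp (Finset.mem_of_mem_erase (Finset.mem_of_mem_erase hm0mem))
  have hm0i : m0 ≠ i := fun h => hm0'.2 (by simp [h])
  have hm0j : m0 ≠ j := fun h => hm0'.2 (by simp [h])
  have hk0l0 : k0 ≠ l0 := Ne.symm hl0k0
  -- base point
  set y0 : Fin 4 → ℝ := ![0, 0, a k0, a l0] with hy0
  set P0 : ℝ × (Fin 4 → ℝ) := ((0 : ℝ), y0) with hP0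
  have hxh0 : xh i j k0 l0 a y0 = a := by
    funext p
    unfold xh
    split_ifs with e1 e2 e3 e4
    · rw [e1, hai]; simp [hy0]
    · rw [e2, haj]; simp [hy0]
    · rw [e3]; simp [hy0]
    · rw [e4]; simp [hy0]
    · rfl
  have hQfa : ∀ p q : Fin n, Qf c i j k0 l0 a y0 p q
      = ∑ k ∈ Finset.univ.erase q, a k * c p k q := by
    intro p q; unfold Qf; rw [hxh0]
  have hQ0ij : Qf c i j k0 l0 a y0 i j = 0 := by
    rw [hQfa]
    have hsub : Finset.univ.filter (fun k : Fin n => k ≠ i ∧ k ≠ j) ⊆ Finset.univ.erase j := by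
      intro x hx
      exact Finset.mem_erase.mpr ⟨(Finset.mem_filter.mp hx).2.2, Finset.mem_univ _⟩
    have hz : ∀ x ∈ Finset.univ.erase j,
        x ∉ Finset.univ.filter (fun k : Fin n => k ≠ i ∧ k ≠ j) → a x * c i x j = 0 := by
      intro x hx hnx
      have hxj := Finset.ne_of_mem_erase hx
      have hxi : x = i := by
        by_contra hxi
        exact hnx (Finset.mem_filter.mpr ⟨Finset.mem_univ _, hxi, hxj⟩)
      rw [hxi, hai, zero_mul]
    rw [← Finset.sum_subset hsub hz, ← heq1]
    exact Finset.sum_congr rfl fun k _ => mul_comm _ _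
  have hQ0ji : Qf c i j k0 l0 a y0 j i = 0 := by
    rw [hQfa]
    have hsub : Finset.univ.filter (fun k : Fin n => k ≠ i ∧ k ≠ j) ⊆ Finset.univ.erase i := by
      intro x hx
      exact Finset.mem_erase.mpr ⟨(Finset.mem_filter.mp hx).2.1, Finset.mem_univ _⟩
    have hz : ∀ x ∈ Finset.univ.erase i,
        x ∉ Finset.univ.filter (fun k : Fin n => k ≠ i ∧ k ≠ j) → a x * c j x i = 0 := by
      intro x hx hnx
      have hxi := Finset.ne_of_mem_erase hx
      have hxj : x = j := by
        by_contra hxj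
        exact hnx (Finset.mem_filter.mpr ⟨Finset.mem_univ _, hxi, hxj⟩)
      rw [hxj, haj, zero_mul]
    rw [← Finset.sum_subset hsub hz, ← heq2]
    exact Finset.sum_congr rfl fun k _ => mul_comm _ _
  have hPhi0 : Phi c i j k0 l0 a 0 y0 = 0 := by
    funext m
    have hQ0ij' : Qf c i j k0 l0 a ![0, 0, a k0, a l0] i j = 0 := hQ0ij
    have hQ0ji' : Qf c i j k0 l0 a ![0, 0, a k0, a l0] j i = 0 := hQ0ji
    fin_cases m <;>
      simp [Phi, hQ0ij, hQ0ji, hy0, hQ0ij', hQ0ji']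
  have hMSS0 : MSS c i j k0 l0 a 0 y0 = Matrix.diagonal (fun r : SIdx i j => a r.1) := by
    ext r s
    rw [Matrix.diagonal_apply]
    show (if (r : Fin n) = (s : Fin n) then xh i j k0 l0 a y0 r else 0)
        + 0 * Qf c i j k0 l0 a y0 r s = _
    rw [hxh0, zero_mul, add_zero]
    by_cases h : r = s
    · rw [if_pos (congrArg Subtype.val h), if_pos h]
    · rw [if_neg (fun hh => h (Subtype.ext hh)), if_neg h]
  have hdet0 : (MSS c i j k0 l0 a 0 y0).det ≠ 0 := by
    rw [hMSS0, Matrix.det_diagonal]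
    exact Finset.prod_ne_zero_iff.mpr fun r _ => hak r.1 r.2.1 r.2.2
  -- derivative data
  set dfun : ℝ × (Fin 4 → ℝ) → ℝ := fun pt => (MSS c i j k0 l0 a pt.1 pt.2).det with hdfun
  have hδF : HasFDerivAt dfun (fderiv ℝ dfun P0) P0 :=
    (((det_cd c i j k0 l0 a).differentiable one_ne_zero) P0).hasFDerivAt
  have hAF : ∀ p q : Fin n,
      HasFDerivAt (fun pt : ℝ × (Fin 4 → ℝ) => Aq c i j k0 l0 a pt.1 pt.2 p q)
        (fderiv ℝ (fun pt : ℝ × (Fin 4 → ℝ) => Aq c i j k0 l0 a pt.1 pt.2 p q) P0) P0 :=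
    fun p q => (((Aq_cd c i j k0 l0 a p q).differentiable one_ne_zero) P0).hasFDerivAt
  -- the four components of Phi and their derivatives at P0
  have hgi : HasFDerivAt (fun pt : ℝ × (Fin 4 → ℝ) =>
      pt.2 0 + pt.1 * Qf c i j k0 l0 a pt.2 i i)
      ((prm 0) + (P0.1 • LQm c i j k0 l0 i i
        + Qf c i j k0 l0 a P0.2 i i • ContinuousLinearMap.fst ℝ ℝ (Fin 4 → ℝ))) P0 :=
    HasFDerivAt.add ((prm 0).hasFDerivAt) (hasFDerivAt_fst.mul (Qf_hasF c i j k0 l0 a i i P0))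
  have hgj : HasFDerivAt (fun pt : ℝ × (Fin 4 → ℝ) =>
      pt.2 1 + pt.1 * Qf c i j k0 l0 a pt.2 j j)
      ((prm 1) + (P0.1 • LQm c i j k0 l0 j j
        + Qf c i j k0 l0 a P0.2 j j • ContinuousLinearMap.fst ℝ ℝ (Fin 4 → ℝ))) P0 :=
    HasFDerivAt.add ((prm 1).hasFDerivAt) (hasFDerivAt_fst.mul (Qf_hasF c i j k0 l0 a j j P0))
  have hc0 := (hδF.mul hgi).sub
    (hasFDerivAt_fst.mul (hasFDerivAt_fst.mul (hAF i i)))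
  have hc1 := (hδF.mul hgj).sub
    (hasFDerivAt_fst.mul (hasFDerivAt_fst.mul (hAF j j)))
  have hc2 := (hδF.mul (Qf_hasF c i j k0 l0 a i j P0)).sub
    (hasFDerivAt_fst.mul (hAF i j))
  have hc3 := (hδF.mul (Qf_hasF c i j k0 l0 a j i P0)).sub
    (hasFDerivAt_fst.mul (hAF j i))
  have e0 : (fun pt : ℝ × (Fin 4 → ℝ) => Phi c i j k0 l0 a pt.1 pt.2 0)
      = fun pt : ℝ × (Fin 4 → ℝ) => dfun pt * (pt.2 0 + pt.1 * Qf c i j k0 l0 a pt.2 i i)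
        - pt.1 * (pt.1 * Aq c i j k0 l0 a pt.1 pt.2 i i) := by
    funext pt; simp [Phi, hdfun]
  have e1 : (fun pt : ℝ × (Fin 4 → ℝ) => Phi c i j k0 l0 a pt.1 pt.2 1)
      = fun pt : ℝ × (Fin 4 → ℝ) => dfun pt * (pt.2 1 + pt.1 * Qf c i j k0 l0 a pt.2 j j)
        - pt.1 * (pt.1 * Aq c i j k0 l0 a pt.1 pt.2 j j) := by
    funext pt; simp [Phi, hdfun]
  have e2 : (fun pt : ℝ × (Fin 4 → ℝ) => Phi c i j k0 l0 a pt.1 pt.2 2)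
      = fun pt : ℝ × (Fin 4 → ℝ) => dfun pt * Qf c i j k0 l0 a pt.2 i j
        - pt.1 * Aq c i j k0 l0 a pt.1 pt.2 i j := by
    funext pt; simp [Phi, hdfun]
  have e3 : (fun pt : ℝ × (Fin 4 → ℝ) => Phi c i j k0 l0 a pt.1 pt.2 3)
      = fun pt : ℝ × (Fin 4 → ℝ) => dfun pt * Qf c i j k0 l0 a pt.2 j i
        - pt.1 * Aq c i j k0 l0 a pt.1 pt.2 j i := by
    funext pt; simp [Phi, hdfun]
  replace hc0 := hc0.congr_of_eventuallyEq (Filter.Eventually.of_forall fun pt => congrFun e0 pt)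
  replace hc1 := hc1.congr_of_eventuallyEq (Filter.Eventually.of_forall fun pt => congrFun e1 pt)
  replace hc2 := hc2.congr_of_eventuallyEq (Filter.Eventually.of_forall fun pt => congrFun e2 pt)
  replace hc3 := hc3.congr_of_eventuallyEq (Filter.Eventually.of_forall fun pt => congrFun e3 pt)
  have hfd0 := hc0.fderiv
  have hfd1 := hc1.fderiv
  have hfd2 := hc2.fderiv
  have hfd3 := hc3.fderiv
  have hDall : ∀ m : Fin 4, DifferentiableAt ℝ
      (fun pt : ℝ × (Fin 4 → ℝ) => Phi c i j k0 l0 a pt.1 pt.2 m) P0 := by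
    intro m
    fin_cases m
    · exact hc0.differentiableAt
    · exact hc1.differentiableAt
    · exact hc2.differentiableAt
    · exact hc3.differentiableAt
  set Φ' : (ℝ × (Fin 4 → ℝ)) →L[ℝ] (Fin 4 → ℝ) := ContinuousLinearMap.pi
    (fun m => fderiv ℝ (fun pt : ℝ × (Fin 4 → ℝ) => Phi c i j k0 l0 a pt.1 pt.2 m) P0)
    with hΦ'def
  have hΦF : HasFDerivAt (fun pt : ℝ × (Fin 4 → ℝ) => Phi c i j k0 l0 a pt.1 pt.2) Φ' P0 := by
    apply hasFDerivAt_pi''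
    intro m
    rw [hΦ'def, ContinuousLinearMap.proj_pi]
    exact (hDall m).hasFDerivAt
  set LG : (ℝ × (Fin 4 → ℝ)) →L[ℝ] ℝ × (Fin 4 → ℝ) :=
    ContinuousLinearMap.prod (ContinuousLinearMap.fst ℝ ℝ (Fin 4 → ℝ)) Φ' with hLG
  set G : ℝ × (Fin 4 → ℝ) → ℝ × (Fin 4 → ℝ) :=
    fun pt => (pt.1, Phi c i j k0 l0 a pt.1 pt.2) with hGdef
  have hGF : HasFDerivAt G LG P0 := hasFDerivAt_fst.prodMk hΦF
  have hGcd : ContDiffAt ℝ 1 G P0 := (contDiff_fst.prodMk (Phi_cd c i j k0 l0 a)).contDiffAt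
  have hP01 : P0.1 = 0 := rfl
  have hP02 : P0.2 = y0 := rfl
  have hy00 : y0 0 = 0 := rfl
  have hy01 : y0 1 = 0 := rfl
  have hker : ∀ v : ℝ × (Fin 4 → ℝ), LG v = 0 → v = 0 := by
    intro v hv
    have hv1 : v.1 = 0 := congrArg Prod.fst hv
    have hvm : ∀ m : Fin 4, fderiv ℝ
        (fun pt : ℝ × (Fin 4 → ℝ) => Phi c i j k0 l0 a pt.1 pt.2 m) P0 v = 0 := by
      intro m
      have h := congrArg Prod.snd hv
      have h2 := congrFun h m
      simpa [hLG, hΦ'def, ContinuousLinearMap.pi_apply] using h2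
    have h0 := hvm 0
    have h1 := hvm 1
    have h2 := hvm 2
    have h3 := hvm 3
    rw [hfd0] at h0
    rw [hfd1] at h1
    rw [hfd2] at h2
    rw [hfd3] at h3
    simp only [ContinuousLinearMap.sub_apply, ContinuousLinearMap.add_apply,
      ContinuousLinearMap.coe_smul', Pi.smul_apply, smul_eq_mul,
      ContinuousLinearMap.coe_fst', prm_apply, hv1, hP01, hP02, hy00, hy01,
      hQ0ij, hQ0ji, mul_zero, add_zero, zero_mul, zero_add, sub_zero] at h0 h1 h2 h3
    have hdP0 : dfun P0 ≠ 0 := hdet0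
    have hv20 : v.2 0 = 0 := (mul_eq_zero.mp h0).resolve_left hdP0
    have hv21 : v.2 1 = 0 := (mul_eq_zero.mp h1).resolve_left hdP0
    have hLQij := (mul_eq_zero.mp h2).resolve_left hdP0
    have hLQji := (mul_eq_zero.mp h3).resolve_left hdP0
    rw [LQm_eval_ij c i j k0 l0 hij hk0i hk0j hl0i hl0j hk0l0 v, hv20, mul_zero, zero_add]
      at hLQij
    rw [LQm_eval_ji c i j k0 l0 hij hk0i hk0j hl0i hl0j hk0l0 v, hv21, mul_zero, zero_add]
      at hLQji
    have hDmat : c i k0 j * c j l0 i - c j k0 i * c i l0 j ≠ 0 :=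
      sub_ne_zero.mpr (hC1 k0 l0 hk0l0 hk0i hk0j hl0i hl0j)
    have hv22 : v.2 2 = 0 := by
      have hx : (c i k0 j * c j l0 i - c j k0 i * c i l0 j) * v.2 2
          = c j l0 i * (c i k0 j * v.2 2 + c i l0 j * v.2 3)
            - c i l0 j * (c j k0 i * v.2 2 + c j l0 i * v.2 3) := by ring
      rw [hLQij, hLQji, mul_zero, mul_zero, sub_zero] at hx
      exact (mul_eq_zero.mp hx).resolve_left hDmat
    have hv23 : v.2 3 = 0 := by
      have hx : (c i k0 j * c j l0 i - c j k0 i * c i l0 j) * v.2 3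
          = c i k0 j * (c j k0 i * v.2 2 + c j l0 i * v.2 3)
            - c j k0 i * (c i k0 j * v.2 2 + c i l0 j * v.2 3) := by ring
      rw [hLQij, hLQji, mul_zero, mul_zero, sub_zero] at hx
      exact (mul_eq_zero.mp hx).resolve_left hDmat
    have hv2 : v.2 = 0 := by
      funext m
      fin_cases m
      · exact hv20
      · exact hv21
      · exact hv22
      · exact hv23
    exact Prod.ext_iff.mpr ⟨hv1, hv2⟩
  have hinj : Function.Injective LG := by
    intro x y hxy
    have h := hker (x - y) (by rw [map_sub, hxy, sub_self])
    exact sub_eq_zero.mp h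
  have hinj' : Function.Injective (LG : (ℝ × (Fin 4 → ℝ)) →ₗ[ℝ] ℝ × (Fin 4 → ℝ)) := hinj
  have hbij : Function.Bijective ((LG : (ℝ × (Fin 4 → ℝ)) →ₗ[ℝ] ℝ × (Fin 4 → ℝ))) :=
    ⟨hinj', LinearMap.injective_iff_surjective.mp hinj'⟩
  let eqv : (ℝ × (Fin 4 → ℝ)) ≃L[ℝ] ℝ × (Fin 4 → ℝ) :=
    (LinearEquiv.ofBijective _ hbij).toContinuousLinearEquiv
  have heqv : (eqv : (ℝ × (Fin 4 → ℝ)) →L[ℝ] ℝ × (Fin 4 → ℝ)) = LG :=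
    ContinuousLinearMap.ext fun v => rfl
  have hGF' : HasFDerivAt G (eqv : (ℝ × (Fin 4 → ℝ)) →L[ℝ] ℝ × (Fin 4 → ℝ)) P0 := by
    rw [heqv]; exact hGF
  set H := hGcd.toOpenPartialHomeomorph G hGF' one_ne_zero with hH
  have hHcoe : ⇑H = G := rfl
  have hsrc : P0 ∈ H.source := ContDiffAt.mem_toOpenPartialHomeomorph_source hGcd hGF' one_ne_zero
  have htgt : G P0 ∈ H.target := ContDiffAt.image_mem_toOpenPartialHomeomorph_target hGcd hGF' one_ne_zero
  have hGP0 : G P0 = ((0:ℝ), (0 : Fin 4 → ℝ)) := Prod.ext_iff.mpr ⟨rfl, hPhi0⟩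
  set ψ : ℝ → ℝ × (Fin 4 → ℝ) := fun t => H.symm (t, 0) with hψ
  set W : Set ℝ := (fun t : ℝ => ((t, (0 : Fin 4 → ℝ)))) ⁻¹' H.target with hWdef
  have hWopen : IsOpen W := H.open_target.preimage (continuous_id.prodMk continuous_const)
  have h0W : (0:ℝ) ∈ W := by
    show ((0:ℝ), (0 : Fin 4 → ℝ)) ∈ H.target
    rw [← hGP0]
    exact htgt
  have hψcont : ContinuousOn ψ W :=
    H.continuousOn_symm.comp
      ((continuous_id.prodMk continuous_const).continuousOn) (fun t ht => ht)
  have hψ0 : ψ 0 = P0 := by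
    have h := H.left_inv hsrc
    rw [hHcoe, hGP0] at h
    exact h
  set U : Set (ℝ × (Fin 4 → ℝ)) := {pt | (MSS c i j k0 l0 a pt.1 pt.2).det ≠ 0} with hU
  have hUopen : IsOpen U := by
    have hU2 : U = (fun pt : ℝ × (Fin 4 → ℝ) =>
        (MSS c i j k0 l0 a pt.1 pt.2).det) ⁻¹' ({0}ᶜ) := rfl
    rw [hU2]
    exact (isOpen_compl_singleton).preimage (det_cd c i j k0 l0 a).continuous
  have h0U : ψ 0 ∈ U := by
    rw [hψ0]
    exact hdet0
  have hVopen : IsOpen (W ∩ ψ ⁻¹' U) := hψcont.isOpen_inter_preimage hWopen hUopen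
  have h0V : (0:ℝ) ∈ W ∩ ψ ⁻¹' U := ⟨h0W, h0U⟩
  obtain ⟨T, hTpos, hball⟩ := Metric.isOpen_iff.mp hVopen 0 h0V
  have hIoo : Set.Ioo (0:ℝ) T ⊆ W ∩ ψ ⁻¹' U := by
    intro t ht
    apply hball
    rw [Metric.mem_ball, Real.dist_eq, sub_zero, abs_lt]
    exact ⟨by linarith [ht.1], ht.2⟩
  have hxc : Continuous (fun pt : ℝ × (Fin 4 → ℝ) => xh i j k0 l0 a pt.2) :=
    continuous_pi fun k => (xh_cd i j k0 l0 a k).continuous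
  refine ⟨T, hTpos, fun t => xh i j k0 l0 a ((ψ t).2), ?_, ?_, ?_⟩
  · exact hxc.comp_continuousOn (hψcont.mono (subset_trans hIoo Set.inter_subset_left))
  · have hψat : ContinuousAt ψ 0 := hψcont.continuousAt (hWopen.mem_nhds h0W)
    have hca : ContinuousAt (fun t => xh i j k0 l0 a ((ψ t).2)) 0 :=
      (hxc.continuousAt).comp hψat
    have hval : xh i j k0 l0 a ((ψ 0).2) = a := by
      rw [hψ0]
      exact hxh0
    have ht := hca.tendsto
    rw [hval] at ht
    exact ht.mono_left nhdsWithin_le_nhds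
  · intro t ht
    have htV := hIoo ht
    have htW : ((t, (0 : Fin 4 → ℝ))) ∈ H.target := htV.1
    have hrv : G (ψ t) = (t, 0) := by
      have h := H.right_inv htW
      rw [hHcoe] at h
      exact h
    have ht1 : (ψ t).1 = t := congrArg Prod.fst hrv
    have hPhit : Phi c i j k0 l0 a t ((ψ t).2) = 0 := by
      have h := congrArg Prod.snd hrv
      have h2 : Phi c i j k0 l0 a ((ψ t).1) ((ψ t).2) = 0 := h
      rw [ht1] at h2
      exact h2
    have hdet_t : (MSS c i j k0 l0 a t ((ψ t).2)).det ≠ 0 := by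
      have h : (MSS c i j k0 l0 a ((ψ t).1) ((ψ t).2)).det ≠ 0 := htV.2
      rw [ht1] at h
      exact h
    constructor
    · intro hzero
      have hxm0 : xh i j k0 l0 a ((ψ t).2) m0 = a m0 := by
        unfold xh
        rw [if_neg hm0i, if_neg hm0j, if_neg hm0k0, if_neg hm0l0]
      exact hak m0 hm0i hm0j (hxm0.symm.trans (congrFun hzero m0))
    · have hr := rank_le c i j k0 l0 a hc hij hji t ((ψ t).2) hdet_t hPhit
      rw [card_sidx i j hij (by omega)] at hr
      exact hr
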